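/- Let G_{k,i} be independent geometric random variables where G_{k,i} counts failures before success with success probability 2k/(5n). Then for λ with e^λ = 1/(1 − m/(5n)), E[exp(λ(Σ_{i=1}^{γm/μ} G_{m,i} + Σ_{i=1}^{γ/μ} Σ_{k=m+1}^{n/2} G_{k,i}))] ≤ 2^{γm/μ}·exp((γ/μ)·(m/2)·ln n). -/

import Mathlib

/-- The moment generating function `E[e^{λG}] = Σ_j (1−p)^j p e^{λj}` of a geometric
random variable G with success probability p (counting failures before success). -/
noncomputable def geomMGF (p lam : ℝ) : ℝ :=
  ∑' j : ℕ, (1 - p)^j * p * Real.exp (lam * j)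

lemma geomMGF_eval {a p : ℝ} (ha : 0 ≤ a) (hap : a < p) (hp : p ≤ 1) (ha1 : a < 1) :
    geomMGF p (Real.log (1/(1-a))) = p*(1-a)/(p-a) := by
  have h1a : (0:ℝ) < 1 - a := by linarith
  have hx : (0:ℝ) < 1/(1-a) := by positivity
  have hr0 : 0 ≤ (1-p)/(1-a) := by
    apply div_nonneg <;> linarith
  have hr1 : (1-p)/(1-a) < 1 := by
    rw [div_lt_one h1a]; linarith
  unfold geomMGF
  have hterm : ∀ j : ℕ, (1 - p)^j * p * Real.exp (Real.log (1/(1-a)) * j)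
      = ((1-p)/(1-a))^j * p := by
    intro j
    rw [mul_comm (Real.log (1/(1-a))) (j:ℝ), Real.exp_nat_mul, Real.exp_log hx,
      div_pow, div_pow, one_pow]
    ring
  simp_rw [hterm]
  rw [tsum_mul_right, tsum_geometric_of_lt_one hr0 hr1]
  have h1 : 1 - (1-p)/(1-a) = (p-a)/(1-a) := by
    field_simp
    ring
  rw [h1]
  have hpa : (0:ℝ) < p - a := by linarith
  field_simp

lemma telescope (m N : ℕ) (h : m ≤ N) :
    ∏ k ∈ Finset.Icc (m+1) N, ((k:ℝ)/((k:ℝ)-m)) = (N.choose m : ℝ) := by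
  induction N, h using Nat.le_induction with
  | base => simp
  | succ N hN ih =>
    rw [Finset.prod_Icc_succ_top (by omega), ih]
    have hkey : (N + 1) * N.choose m = (N+1).choose m * (N + 1 - m) := by
      have h1 := Nat.add_one_mul_choose_eq N (N - m)
      rw [Nat.choose_symm hN] at h1
      have h2 : N - m + 1 = N + 1 - m := by omega
      rw [h2] at h1
      rw [Nat.choose_symm (show m ≤ N + 1 by omega)] at h1
      simpa using h1
    have hml : (m:ℝ) ≤ N := by exact_mod_cast hN
    have hpos : (0:ℝ) < (N:ℝ) + 1 - m := by linarith
    have hc := congrArg (Nat.cast : ℕ → ℝ) hkey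
    push_cast [Nat.cast_sub (show m ≤ N + 1 by omega)] at hc
    push_cast
    field_simp
    nlinarith [hc]

/-- Let `G_{k,i}` be independent geometric random variables counting
failures before success with success probability `2k/(5n)`.  By independence, the
expectation `E[exp(λ(Σ_{i=1}^{γm/μ} G_{m,i} + Σ_{i=1}^{γ/μ} Σ_{k=m+1}^{n/2} G_{k,i}))]`
(with μ = 1/2, so the outer multiplicities are 2γm and 2γ) is the corresponding
product of geometric moment generating functions; for λ with
`e^λ = 1/(1 − m/(5n))` it is at most `2^{γm/μ}·exp((γ/μ)·(m/2)·ln n)`. -/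
theorem stmt_15 (n m γ : ℕ) (hm : 1 ≤ m) (hmn : 2*m ≤ n) :
    (geomMGF (2*(m:ℝ)/(5*(n:ℝ))) (Real.log (1/(1 - (m:ℝ)/(5*(n:ℝ))))))^(2*γ*m) *
      ∏ k ∈ Finset.Icc (m+1) (n/2),
        (geomMGF (2*(k:ℝ)/(5*(n:ℝ))) (Real.log (1/(1 - (m:ℝ)/(5*(n:ℝ))))))^(2*γ)
    ≤ (2:ℝ)^(2*γ*m) * Real.exp ((2*(γ:ℝ)) * ((m:ℝ)/2) * Real.log n) := by
  have hn : (2:ℕ) ≤ n := by omega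
  have hnR : (0:ℝ) < n := by positivity
  set a : ℝ := (m:ℝ)/(5*(n:ℝ)) with ha_def
  have ha0 : 0 ≤ a := by positivity
  have ha1 : a < 1 := by
    rw [ha_def, div_lt_one (by positivity)]
    have : (m:ℝ) ≤ n := by exact_mod_cast (by omega : m ≤ n)
    linarith
  have heval : ∀ k : ℕ, m ≤ k → k ≤ n/2 →
      geomMGF (2*(k:ℝ)/(5*(n:ℝ))) (Real.log (1/(1-a)))
        = (2*(k:ℝ)/(5*(n:ℝ)))*(1-a)/((2*(k:ℝ)/(5*(n:ℝ)))-a) := by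
    intro k hk1 hk2
    apply geomMGF_eval ha0
    · rw [ha_def, div_lt_div_iff₀ (by positivity) (by positivity)]
      have h1 : 1 ≤ k := le_trans hm hk1
      have : (m:ℝ) < 2 * k := by
        have : m < 2*k := by omega
        exact_mod_cast this
      nlinarith
    · rw [div_le_one (by positivity)]
      have : 2*k ≤ n := by omega
      have : (2*(k:ℝ)) ≤ n := by exact_mod_cast this
      linarith
    · exact ha1
  have hbound : ∀ k : ℕ, m ≤ k → k ≤ n/2 →
      geomMGF (2*(k:ℝ)/(5*(n:ℝ))) (Real.log (1/(1-a))) ≤ 2*(k:ℝ)/(2*(k:ℝ)-m) := by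
    intro k hk1 hk2
    rw [heval k hk1 hk2]
    have hk0 : (0:ℝ) < k := by
      have : 1 ≤ k := le_trans hm hk1
      exact_mod_cast Nat.lt_of_lt_of_le Nat.zero_lt_one this
    have hmk : (m:ℝ) ≤ k := by exact_mod_cast hk1
    have hden : (0:ℝ) < 2*(k:ℝ) - m := by linarith
    have heq : 2*(k:ℝ)/(5*(n:ℝ)) * (1-a) / ((2*(k:ℝ)/(5*(n:ℝ)))-a)
        = 2*(k:ℝ)*(1-a)/(2*(k:ℝ)-m) := by
      rw [ha_def]
      rw [show 2*(k:ℝ)/(5*(n:ℝ)) - (m:ℝ)/(5*(n:ℝ)) = (2*(k:ℝ)-m)/(5*(n:ℝ)) by ring]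
      field_simp
    rw [heq]
    exact div_le_div₀ (by positivity) (by nlinarith) hden le_rfl
  have hnonneg : ∀ k : ℕ, m ≤ k → k ≤ n/2 →
      0 ≤ geomMGF (2*(k:ℝ)/(5*(n:ℝ))) (Real.log (1/(1-a))) := by
    intro k hk1 hk2
    rw [heval k hk1 hk2]
    have hk0 : (0:ℝ) < k := by
      have : 1 ≤ k := le_trans hm hk1
      exact_mod_cast Nat.lt_of_lt_of_le Nat.zero_lt_one this
    have hmk : (m:ℝ) ≤ k := by exact_mod_cast hk1
    have hpa : 0 < (2*(k:ℝ)/(5*(n:ℝ)))-a := by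
      rw [ha_def, show 2*(k:ℝ)/(5*(n:ℝ)) - (m:ℝ)/(5*(n:ℝ)) = (2*(k:ℝ)-m)/(5*(n:ℝ)) by ring]
      apply div_pos (by linarith) (by positivity)
    exact div_nonneg (mul_nonneg (by positivity) (by linarith)) hpa.le
  have hmn2 : m ≤ n/2 := by omega
  -- bound for the first factor
  have hm0 : (m:ℝ) ≠ 0 := by positivity
  have hA : geomMGF (2*(m:ℝ)/(5*(n:ℝ))) (Real.log (1/(1-a))) ≤ 2 := by
    have h := hbound m le_rfl hmn2
    have : 2*(m:ℝ)/(2*(m:ℝ)-m) = 2 := by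
      rw [show 2*(m:ℝ) - m = m by ring]
      field_simp
    linarith [h, this ▸ h]
  -- bound for the product
  set Q : ℝ := ∏ k ∈ Finset.Icc (m+1) (n/2), (2*(k:ℝ)/(2*(k:ℝ)-m)) with hQ
  have hQ0 : 0 ≤ Q := by
    apply Finset.prod_nonneg
    intro k hk
    rw [Finset.mem_Icc] at hk
    have hmk : (m:ℝ) ≤ k := by exact_mod_cast (by omega : m ≤ k)
    apply div_nonneg (by positivity) (by linarith)
  have hQ2 : Q^2 ≤ ((n:ℝ))^m := by
    have h1 : Q^2 = ∏ k ∈ Finset.Icc (m+1) (n/2), (2*(k:ℝ)/(2*(k:ℝ)-m))^2 := by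
      rw [hQ, ← Finset.prod_pow]
    have h2 : ∏ k ∈ Finset.Icc (m+1) (n/2), (2*(k:ℝ)/(2*(k:ℝ)-m))^2
        ≤ ∏ k ∈ Finset.Icc (m+1) (n/2), ((k:ℝ)/((k:ℝ)-m)) := by
      apply Finset.prod_le_prod
      · intro k hk; positivity
      · intro k hk
        rw [Finset.mem_Icc] at hk
        have hmk : (m:ℝ) + 1 ≤ k := by exact_mod_cast hk.1
        have hd1 : (0:ℝ) < 2*(k:ℝ) - m := by linarith
        have hd2 : (0:ℝ) < (k:ℝ) - m := by linarith
        rw [div_pow, div_le_div_iff₀ (by positivity) hd2]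
        nlinarith [sq_nonneg (m:ℝ), hmk]
    have h3 := telescope m (n/2) hmn2
    have h4 : ((n/2).choose m : ℝ) ≤ (n:ℝ)^m := by
      calc ((n/2).choose m : ℝ) ≤ (((n/2)^m : ℕ) : ℝ) := by
            exact_mod_cast Nat.choose_le_pow (n/2) m
        _ ≤ ((n^m : ℕ) : ℝ) := by
            exact_mod_cast Nat.pow_le_pow_left (by omega : n/2 ≤ n) m
        _ = (n:ℝ)^m := by push_cast; ring
    rw [h1]
    calc _ ≤ _ := h2
      _ = ((n/2).choose m : ℝ) := h3
      _ ≤ (n:ℝ)^m := h4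
  -- RHS rewriting
  have hRHS : Real.exp ((2*(γ:ℝ)) * ((m:ℝ)/2) * Real.log n) = (n:ℝ)^(γ*m) := by
    rw [show (2*(γ:ℝ)) * ((m:ℝ)/2) * Real.log n = ((γ*m : ℕ):ℝ) * Real.log n by
      push_cast; ring]
    rw [Real.exp_nat_mul, Real.exp_log hnR]
  rw [hRHS]
  have step1 : (geomMGF (2*(m:ℝ)/(5*(n:ℝ))) (Real.log (1/(1-a))))^(2*γ*m) ≤ (2:ℝ)^(2*γ*m) :=
    pow_le_pow_left₀ (hnonneg m le_rfl hmn2) hA _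
  have step2 : ∏ k ∈ Finset.Icc (m+1) (n/2),
      (geomMGF (2*(k:ℝ)/(5*(n:ℝ))) (Real.log (1/(1-a))))^(2*γ)
      ≤ ∏ k ∈ Finset.Icc (m+1) (n/2), (2*(k:ℝ)/(2*(k:ℝ)-m))^(2*γ) := by
    apply Finset.prod_le_prod
    · intro k hk
      rw [Finset.mem_Icc] at hk
      exact pow_nonneg (hnonneg k (by omega) hk.2) _
    · intro k hk
      rw [Finset.mem_Icc] at hk
      exact pow_le_pow_left₀ (hnonneg k (by omega) hk.2) (hbound k (by omega) hk.2) _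
  have step3 : ∏ k ∈ Finset.Icc (m+1) (n/2), (2*(k:ℝ)/(2*(k:ℝ)-m))^(2*γ)
      ≤ (n:ℝ)^(γ*m) := by
    rw [Finset.prod_pow, ← hQ]
    calc Q^(2*γ) = (Q^2)^γ := by rw [← pow_mul]
      _ ≤ ((n:ℝ)^m)^γ := pow_le_pow_left₀ (by positivity) hQ2 γ
      _ = (n:ℝ)^(γ*m) := by rw [← pow_mul, mul_comm]
  have hprod_nonneg : 0 ≤ ∏ k ∈ Finset.Icc (m+1) (n/2),
      (geomMGF (2*(k:ℝ)/(5*(n:ℝ))) (Real.log (1/(1-a))))^(2*γ) := by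
    apply Finset.prod_nonneg
    intro k hk
    rw [Finset.mem_Icc] at hk
    exact pow_nonneg (hnonneg k (by omega) hk.2) _
  calc (geomMGF (2*(m:ℝ)/(5*(n:ℝ))) (Real.log (1/(1-a))))^(2*γ*m) *
        ∏ k ∈ Finset.Icc (m+1) (n/2),
          (geomMGF (2*(k:ℝ)/(5*(n:ℝ))) (Real.log (1/(1-a))))^(2*γ)
      ≤ (2:ℝ)^(2*γ*m) * ((n:ℝ)^(γ*m)) := by
        apply mul_le_mul step1 (step2.trans step3) hprod_nonneg (by positivity)
    _ = (2:ℝ)^(2*γ*m) * (n:ℝ)^(γ*m) := rfl
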